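/- arXiv:1706.02733 — 2 statements merged into one kernel-verified Lean document; each statement's English description precedes it below -/
import Mathlib

section
/- With parameter settings δ = β/(kn), ε = (log(k/β)·√(log(1/δ))/n)^{3/5}, σ = √(log(1/δ))/(εn), λ = 4 log(4k/β)σ, and B ≤ 4/λ, the quantity 18ε√B + λ + 2log(4k/β)σ is bounded by C · log(k/β)^{2/5} · log(kn/β)^{1/5} / n^{2/5} for an absolute constant C > 0, for all n, k ≥ 2 and β ∈ (0,1). -/
lemma shaky_aux {x y m L B : ℝ} (hx : 0 < x) (hxL : x ≤ L) (hL3 : L ≤ 3 * x)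
    (hy : 0 < y) (hm : 0 < m) (hB : 0 ≤ B)
    (hBle : B ≤ 4 / (4 * L * (Real.sqrt y / ((x * Real.sqrt y / m) ^ ((3:ℝ)/5) * m)))) :
    18 * (x * Real.sqrt y / m) ^ ((3:ℝ)/5) * Real.sqrt B
      + 6 * (L * (Real.sqrt y / ((x * Real.sqrt y / m) ^ ((3:ℝ)/5) * m)))
      ≤ 36 * x ^ ((2:ℝ)/5) * y ^ ((1:ℝ)/5) / m ^ ((2:ℝ)/5) := by
  have hL : 0 < L := lt_of_lt_of_le hx hxL
  set s := Real.sqrt y with hs_def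
  have hs : 0 < s := Real.sqrt_pos.2 hy
  set t := (x * s / m) ^ ((3:ℝ)/5) with ht_def
  have htbase : 0 < x * s / m := by positivity
  have ht : 0 < t := Real.rpow_pos_of_pos htbase _
  set sig := s / (t * m) with hsig_def
  have hsig : 0 < sig := by positivity
  have hlam : 0 < 4 * L * sig := by positivity
  -- log facts
  have hls : Real.log s = (1/2) * Real.log y := by
    rw [hs_def, Real.log_sqrt hy.le]; ring
  have hlt : Real.log t = (3/5) * (Real.log x + (1/2) * Real.log y - Real.log m) := by
    rw [ht_def, Real.log_rpow htbase, Real.log_div (by positivity) hm.ne',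
      Real.log_mul hx.ne' hs.ne', hls]
  have hlsig : Real.log sig = (1/2) * Real.log y - Real.log t - Real.log m := by
    rw [hsig_def, Real.log_div hs.ne' (by positivity), Real.log_mul ht.ne' hm.ne', hls]; ring
  have hlxL : Real.log x ≤ Real.log L := Real.log_le_log hx hxL
  have hlL3 : Real.log L ≤ Real.log 3 + Real.log x := by
    calc Real.log L ≤ Real.log (3 * x) := Real.log_le_log hL hL3
    _ = Real.log 3 + Real.log x := Real.log_mul (by norm_num) hx.ne'
  have h36 : Real.log 36 = Real.log 18 + Real.log 2 := by
    rw [← Real.log_mul (by norm_num) (by norm_num)]; norm_num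
  have h4 : Real.log 4 = 2 * Real.log 2 := by
    rw [show (4:ℝ) = 2^2 by norm_num, Real.log_pow]; push_cast; ring
  have h18 : Real.log 18 = Real.log 6 + Real.log 3 := by
    rw [show (18:ℝ) = 6*3 by norm_num, Real.log_mul (by norm_num) (by norm_num)]
  have hRpos : 0 < x ^ ((2:ℝ)/5) * y ^ ((1:ℝ)/5) / m ^ ((2:ℝ)/5) := by positivity
  have hlR : Real.log (x ^ ((2:ℝ)/5) * y ^ ((1:ℝ)/5) / m ^ ((2:ℝ)/5)) =
      (2/5) * Real.log x + (1/5) * Real.log y - (2/5) * Real.log m := by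
    rw [Real.log_div (by positivity) (by positivity),
      Real.log_mul (by positivity) (by positivity),
      Real.log_rpow hx, Real.log_rpow hy, Real.log_rpow hm]
  -- bound on sqrt B
  have hsqrt4 : Real.sqrt 4 = 2 := by
    rw [show (4:ℝ) = 2^2 by norm_num, Real.sqrt_sq (by norm_num)]
  have hsqB : Real.sqrt B ≤ 2 / Real.sqrt (4 * L * sig) := by
    calc Real.sqrt B ≤ Real.sqrt (4 / (4 * L * sig)) := Real.sqrt_le_sqrt hBle
    _ = 2 / Real.sqrt (4 * L * sig) := by
        rw [Real.sqrt_div (by norm_num) _, hsqrt4]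
  -- key1
  have key1 : 36 * t / Real.sqrt (4 * L * sig) ≤
      18 * (x ^ ((2:ℝ)/5) * y ^ ((1:ℝ)/5) / m ^ ((2:ℝ)/5)) := by
    have hlhs : 0 < 36 * t / Real.sqrt (4 * L * sig) := by positivity
    rw [← Real.log_le_log_iff hlhs (by positivity)]
    rw [Real.log_div (by positivity) (Real.sqrt_pos.2 hlam).ne',
      Real.log_mul (by norm_num) ht.ne', Real.log_sqrt hlam.le,
      Real.log_mul (by positivity) hsig.ne', Real.log_mul (by norm_num) hL.ne',
      Real.log_mul (by norm_num) hRpos.ne', hlR, hlsig, hlt]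
    linarith
  -- key2
  have key2 : 6 * (L * sig) ≤ 18 * (x ^ ((2:ℝ)/5) * y ^ ((1:ℝ)/5) / m ^ ((2:ℝ)/5)) := by
    rw [← Real.log_le_log_iff (by positivity) (by positivity),
      Real.log_mul (by norm_num) (by positivity), Real.log_mul hL.ne' hsig.ne',
      Real.log_mul (by norm_num) hRpos.ne', hlR, hlsig, hlt]
    linarith
  have h1 : 18 * t * Real.sqrt B ≤ 36 * t / Real.sqrt (4 * L * sig) := by
    have := mul_le_mul_of_nonneg_left hsqB (by positivity : (0:ℝ) ≤ 18 * t)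
    calc 18 * t * Real.sqrt B ≤ 18 * t * (2 / Real.sqrt (4 * L * sig)) := this
    _ = 36 * t / Real.sqrt (4 * L * sig) := by ring
  calc 18 * t * Real.sqrt B + 6 * (L * sig)
      ≤ 36 * t / Real.sqrt (4 * L * sig) + 18 * (x ^ ((2:ℝ)/5) * y ^ ((1:ℝ)/5) / m ^ ((2:ℝ)/5)) :=
        add_le_add h1 key2
    _ ≤ 36 * x ^ ((2:ℝ)/5) * y ^ ((1:ℝ)/5) / m ^ ((2:ℝ)/5) := by
        have heq : 36 * x ^ ((2:ℝ)/5) * y ^ ((1:ℝ)/5) / m ^ ((2:ℝ)/5)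
            = 36 * (x ^ ((2:ℝ)/5) * y ^ ((1:ℝ)/5) / m ^ ((2:ℝ)/5)) := by ring
        rw [heq]; linarith [key1]

/-- The parameter-balancing calculation in the Shaky Ladder upper bound: with
`δ = β/(kn)`, `ε = (log(k/β)·√(log(1/δ))/n)^{3/5}`, `σ = √(log(1/δ))/(εn)`,
`λ = 4 log(4k/β) σ` and `B ≤ 4/λ`, the error expression
`18ε√B + λ + 2 log(4k/β) σ` is at most
`C · log(k/β)^{2/5} · log(kn/β)^{1/5} / n^{2/5}` for an absolute constant `C`. -/
theorem shaky_ladder_parameter_bound :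
    ∃ C : ℝ, 0 < C ∧ ∀ (n k : ℕ), 2 ≤ n → 2 ≤ k → ∀ β : ℝ, 0 < β → β < 1 →
      let δ : ℝ := β / ((k : ℝ) * n)
      let ε : ℝ := (Real.log ((k : ℝ) / β) * Real.sqrt (Real.log (1 / δ)) / n) ^ ((3 : ℝ) / 5)
      let σ : ℝ := Real.sqrt (Real.log (1 / δ)) / (ε * n)
      let lam : ℝ := 4 * Real.log (4 * (k : ℝ) / β) * σ
      ∀ B : ℝ, 0 ≤ B → B ≤ 4 / lam →
        18 * ε * Real.sqrt B + lam + 2 * Real.log (4 * (k : ℝ) / β) * σ ≤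
          C * Real.log ((k : ℝ) / β) ^ ((2 : ℝ) / 5) *
            Real.log ((k : ℝ) * n / β) ^ ((1 : ℝ) / 5) / (n : ℝ) ^ ((2 : ℝ) / 5) := by
  refine ⟨36, by norm_num, ?_⟩
  intro n k hn hk β hβ hβ1
  have hk2 : (2:ℝ) ≤ (k:ℝ) := by exact_mod_cast hk
  have hn2 : (2:ℝ) ≤ (n:ℝ) := by exact_mod_cast hn
  have hm : (0:ℝ) < (n:ℝ) := by linarith
  have hkpos : (0:ℝ) < (k:ℝ) := by linarith
  dsimp only
  rw [one_div_div]
  intro B hB hBle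
  have hkβ : (2:ℝ) ≤ (k:ℝ) / β := by
    rw [le_div_iff₀ hβ]; nlinarith
  have hx : 0 < Real.log ((k:ℝ) / β) := Real.log_pos (by linarith)
  have hy : 0 < Real.log ((k:ℝ) * n / β) := by
    apply Real.log_pos
    rw [lt_div_iff₀ hβ]; nlinarith
  have hxL : Real.log ((k:ℝ) / β) ≤ Real.log (4 * (k:ℝ) / β) := by
    apply Real.log_le_log (by positivity)
    gcongr
    linarith
  have hLeq : Real.log (4 * (k:ℝ) / β) = Real.log 4 + Real.log ((k:ℝ) / β) := by
    rw [show 4 * (k:ℝ) / β = 4 * ((k:ℝ) / β) by ring,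
      Real.log_mul (by norm_num) (by positivity)]
  have hlog2 : Real.log 2 ≤ Real.log ((k:ℝ) / β) := Real.log_le_log (by norm_num) hkβ
  have h4 : Real.log 4 = 2 * Real.log 2 := by
    rw [show (4:ℝ) = 2^2 by norm_num, Real.log_pow]; push_cast; ring
  have hL3 : Real.log (4 * (k:ℝ) / β) ≤ 3 * Real.log ((k:ℝ) / β) := by
    rw [hLeq]; linarith
  have key := shaky_aux hx hxL hL3 hy hm hB hBle
  linarith [key]
end

section
/- Let x₁,…,x_k be real numbers and R₁,…,R_k, r₁,…,r_k reals with |R_t − x_t| ≤ E for all t. Define the leaderboard error lberr = max_{1≤t≤k} |min_{1≤i≤t} x_i − R_t|. If for each t either R_t = R_{t-1} (with R₀ = 1) or R_t = x_t + e_t with |e_t| ≤ E, and R_t ≤ min_{i≤t} x_i + E whenever R_t is not updated because x_t + e'_t ≥ R_{t-1} − λ + e''_t with |e'_t|, |e''_t| ≤ L, then lberr ≤ E + λ + 2L. -/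
/-- Deterministic core of the leaderboard-error lemma for the Shaky Ladder.
`x t` is the population risk of the `t`-th model, `r t` its empirical risk
(accurate to within `E`), and `R t` the released estimate (`R 0 = 1`). At each step
either the algorithm updates, releasing `R t = r t + noise` because the noisy
comparison `r t + e < R (t-1) - λ + e'` succeeded, or it keeps `R t = R (t-1)`
because the noisy comparison failed; all noise values are bounded by `L`.
Then the leaderboard error is at most `E + λ + 2L`:
`|min_{1 ≤ i ≤ t} x i - R t| ≤ E + λ + 2L` for all `1 ≤ t ≤ k`. -/
theorem shaky_ladder_lberr (k : ℕ) (E L lam : ℝ)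
    (hE : 0 ≤ E) (hL : 0 ≤ L) (hlam : 0 < lam) (hLlam : L ≤ lam / 4)
    (x r R : ℕ → ℝ)
    (hx : ∀ t, 0 ≤ x t ∧ x t ≤ 1)
    (hR0 : R 0 = 1)
    (hemp : ∀ t, 1 ≤ t → t ≤ k → |r t - x t| ≤ E)
    (hstep : ∀ t, 1 ≤ t → t ≤ k →
      (∃ e e' e'', |e| ≤ L ∧ |e'| ≤ L ∧ |e''| ≤ L ∧
        r t + e < R (t - 1) - lam + e' ∧ R t = r t + e'') ∨
      (R t = R (t - 1) ∧ ∃ e e', |e| ≤ L ∧ |e'| ≤ L ∧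
        R (t - 1) - lam + e' ≤ r t + e)) :
    ∀ t, ∀ h1 : 1 ≤ t, t ≤ k →
      |(Finset.Icc 1 t).inf' (Finset.nonempty_Icc.mpr h1) x - R t| ≤ E + lam + 2 * L := by
  intro t h1
  induction t, h1 using Nat.le_induction with
  | base =>
    intro hk
    simp only [Finset.Icc_self, Finset.inf'_singleton]
    have hx1 := hx 1
    have hem := abs_le.mp (hemp 1 le_rfl hk)
    rcases hstep 1 le_rfl hk with ⟨e, e', e'', he, he', he'', hcmp, hRt⟩ |
      ⟨hRt, e, e', he, he', hge⟩
    · have h2 := abs_le.mp he''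
      rw [hRt, abs_le]
      constructor <;> linarith
    · simp only [Nat.sub_self, hR0] at hRt hge
      have h2 := abs_le.mp he
      have h3 := abs_le.mp he'
      rw [hRt, abs_le]
      constructor <;> linarith
  | succ n hn ih =>
    intro hk
    have hnk : n ≤ k := le_trans (Nat.le_succ n) hk
    have ihB := abs_le.mp (ih hnk)
    set M := (Finset.Icc 1 n).inf' (Finset.nonempty_Icc.mpr hn) x with hM
    have hsplit : (Finset.Icc 1 (n+1)).inf' (Finset.nonempty_Icc.mpr (Nat.le_succ_of_le hn)) x
        = x (n+1) ⊓ M := by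
      refine (Finset.inf'_congr _ (Finset.insert_Icc_right_eq_Icc_add_one (Nat.le_succ_of_le hn)).symm
        (fun _ _ => rfl)).trans (Finset.inf'_insert (Finset.nonempty_Icc.mpr hn) x)
    rw [hsplit]
    have hem := abs_le.mp (hemp (n+1) (Nat.le_succ_of_le hn) hk)
    have hxle : x (n+1) ⊓ M ≤ x (n+1) := inf_le_left
    have hMle : x (n+1) ⊓ M ≤ M := inf_le_right
    rcases hstep (n+1) (Nat.le_succ_of_le hn) hk with ⟨e, e', e'', he, he', he'', hcmp, hRt⟩ |
      ⟨hRt, e, e', he, he', hge⟩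
    · simp only [Nat.add_sub_cancel] at hcmp
      have h1 := abs_le.mp he
      have h2 := abs_le.mp he'
      have h3 := abs_le.mp he''
      rw [abs_le]
      refine ⟨?_, by linarith⟩
      have hinf : R (n+1) - (E + lam + 2*L) ≤ x (n+1) ⊓ M :=
        le_inf (by linarith) (by linarith)
      linarith
    · simp only [Nat.add_sub_cancel] at hRt hge
      have h1 := abs_le.mp he
      have h2 := abs_le.mp he'
      rw [abs_le]
      refine ⟨?_, by linarith⟩
      have hinf : R (n+1) - (E + lam + 2*L) ≤ x (n+1) ⊓ M :=
        le_inf (by linarith) (by linarith)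
      linarith
end
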